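/- arXiv:1102.0625 — 5 statements merged into one kernel-verified Lean document; each statement's English description precedes it below -/
import Mathlib

section
/- For k > 0 and μ > 0, the function f(x) = (2πkx)^{-1/2} · exp(-(x-μ)²/(2kx)) on (0,∞) integrates to 1, i.e., ∫₀^∞ f(x) dx = 1. -/
open Real MeasureTheory

set_option maxHeartbeats 1000000

theorem unlikely_density_normalization (k μ : ℝ) (hk : 0 < k) (hμ : 0 < μ) :
    ∫ x in Set.Ioi (0:ℝ),
      (Real.sqrt (2 * Real.pi * k * x))⁻¹ * Real.exp (-(x - μ)^2 / (2 * k * x)) = 1 := by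
  set r : ℝ → ℝ := fun u => Real.sqrt (u ^ 2 + 4 * μ) with hr_def
  set s : ℝ → ℝ := fun u => (u + r u) / 2 with hs_def
  set φ : ℝ → ℝ := fun u => (s u) ^ 2 with hφ_def
  have harg_pos : ∀ u : ℝ, 0 < u ^ 2 + 4 * μ := by
    intro u; positivity
  have hr_pos : ∀ u : ℝ, 0 < r u := fun u => Real.sqrt_pos.2 (harg_pos u)
  have hr_sq : ∀ u : ℝ, (r u) ^ 2 = u ^ 2 + 4 * μ := fun u =>
    Real.sq_sqrt (harg_pos u).le
  have hr_gt : ∀ u : ℝ, |u| < r u := by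
    intro u
    have h1 : |u| ^ 2 < (r u) ^ 2 := by
      rw [hr_sq, sq_abs]; linarith
    exact lt_of_pow_lt_pow_left₀ 2 (hr_pos u).le h1
  have hs_pos : ∀ u : ℝ, 0 < s u := by
    intro u
    have := hr_gt u
    have : -u < r u := lt_of_le_of_lt (neg_le_abs u) this
    simp only [hs_def]
    linarith
  have hkey : ∀ u : ℝ, s u ^ 2 - u * s u = μ := by
    intro u
    have : s u ^ 2 - u * s u = ((r u) ^ 2 - u ^ 2) / 4 := by
      simp only [hs_def]; ring
    rw [this, hr_sq]; ring
  have hφ_deriv : ∀ u : ℝ, HasDerivAt φ (s u * (1 + u / r u)) u := by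
    intro u
    have h1 : HasDerivAt (fun u : ℝ => u ^ 2 + 4 * μ) (2 * u) u := by
      simpa using ((hasDerivAt_pow 2 u).add_const (4 * μ))
    have h2 : HasDerivAt r (u / r u) u := by
      have := h1.sqrt (by positivity)
      convert this using 1
      rw [hr_def]
      field_simp
    have h3 : HasDerivAt s ((1 + u / r u) / 2) u :=
      ((hasDerivAt_id u).add h2).div_const 2
    have h4 : HasDerivAt φ (((2:ℕ):ℝ) * s u ^ (2 - 1) * ((1 + u / r u) / 2)) u :=
      h3.fun_pow 2
    convert h4 using 1
    ring
  have hφ_inj : Set.InjOn φ Set.univ := by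
    intro u _ v _ huv
    have hsu : s u = s v := by
      have h1 : s u ^ 2 = s v ^ 2 := huv
      nlinarith [hs_pos u, hs_pos v]
    have h2 : u * s u = v * s v := by
      have h3 := hkey u
      have h4 := hkey v
      rw [hsu] at h3 ⊢
      linarith
    rw [hsu] at h2
    exact mul_right_cancel₀ (hs_pos v).ne' h2
  have hφ_image : φ '' Set.univ = Set.Ioi (0 : ℝ) := by
    apply Set.Subset.antisymm
    · rintro x ⟨u, -, rfl⟩
      exact pow_pos (hs_pos u) 2
    · intro x hx
      have hx0 : (0:ℝ) < x := hx
      refine ⟨Real.sqrt x - μ / Real.sqrt x, Set.mem_univ _, ?_⟩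
      have hsx : (0:ℝ) < Real.sqrt x := Real.sqrt_pos.2 hx0
      have hxx : Real.sqrt x ^ 2 = x := Real.sq_sqrt hx0.le
      set u := Real.sqrt x - μ / Real.sqrt x with hu
      have hru : r u = Real.sqrt x + μ / Real.sqrt x := by
        show Real.sqrt (u ^ 2 + 4 * μ) = _
        have h1 : u ^ 2 + 4 * μ = (Real.sqrt x + μ / Real.sqrt x) ^ 2 := by
          rw [hu]
          field_simp
          rw [hxx]
          ring
        rw [h1]
        exact Real.sqrt_sq (by positivity)
      have hsu : s u = Real.sqrt x := by
        simp only [hs_def]; rw [hru, hu]; ring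
      simp only [hφ_def, hsu, hxx]
  -- change of variables
  have hcv := integral_image_eq_integral_abs_deriv_smul (MeasurableSet.univ)
      (fun u _ => (hφ_deriv u).hasDerivWithinAt)
      hφ_inj
      (fun x => (Real.sqrt (2 * Real.pi * k * x))⁻¹ * Real.exp (-(x - μ)^2 / (2 * k * x)))
  rw [hφ_image] at hcv
  rw [hcv]
  rw [Measure.restrict_univ]
  have hsqrt_pos : (0:ℝ) < Real.sqrt (2 * Real.pi * k) :=
    Real.sqrt_pos.2 (by positivity)
  -- pointwise simplification
  have hpt : ∀ u : ℝ,
      |s u * (1 + u / r u)| •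
        ((Real.sqrt (2 * Real.pi * k * φ u))⁻¹ * Real.exp (-(φ u - μ)^2 / (2 * k * φ u)))
      = (Real.sqrt (2 * Real.pi * k))⁻¹ *
          (Real.exp (-(1/(2*k)) * u ^ 2) + Real.exp (-(1/(2*k)) * u ^ 2) * (u / r u)) := by
    intro u
    have hrp := hr_pos u
    have hsp := hs_pos u
    have h1u : 0 < 1 + u / r u := by
      have : -u < r u := lt_of_le_of_lt (neg_le_abs u) (hr_gt u)
      have h2 : 0 < (r u + u) / r u := div_pos (by linarith) hrp
      calc (0:ℝ) < (r u + u) / r u := h2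
        _ = 1 + u / r u := by field_simp
    have habs : |s u * (1 + u / r u)| = s u * (1 + u / r u) :=
      abs_of_pos (mul_pos hsp h1u)
    have hφu : φ u = s u ^ 2 := rfl
    have hsqrt_split : Real.sqrt (2 * Real.pi * k * φ u)
        = Real.sqrt (2 * Real.pi * k) * s u := by
      rw [hφu, Real.sqrt_mul (by positivity), Real.sqrt_sq hsp.le]
    have hexp_arg : -(φ u - μ)^2 / (2 * k * φ u) = -(1/(2*k)) * u ^ 2 := by
      have h2 : φ u - μ = u * s u := by
        have := hkey u; rw [hφu]; linarith
      rw [h2, hφu]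
      field_simp
    rw [habs, hsqrt_split, hexp_arg, smul_eq_mul]
    have hsne : s u ≠ 0 := hsp.ne'
    have hrne : r u ≠ 0 := hrp.ne'
    field_simp
  simp_rw [hpt]
  rw [integral_const_mul]
  have hgauss_int : Integrable (fun u : ℝ => Real.exp (-(1/(2*k)) * u ^ 2)) :=
    integrable_exp_neg_mul_sq (by positivity)
  have hr_cont : Continuous r :=
    Real.continuous_sqrt.comp ((continuous_pow 2).add continuous_const)
  have hodd_int : Integrable (fun u : ℝ => Real.exp (-(1/(2*k)) * u ^ 2) * (u / r u)) := by
    apply hgauss_int.mono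
    · exact (Real.continuous_exp.comp (continuous_const.mul (continuous_pow 2))).mul
        (continuous_id.div hr_cont fun u => (hr_pos u).ne') |>.aestronglyMeasurable
    · filter_upwards with u
      rw [Real.norm_eq_abs, Real.norm_eq_abs, abs_mul, Real.abs_exp]
      have h1 : |u / r u| ≤ 1 := by
        rw [abs_div, abs_of_pos (hr_pos u)]
        exact div_le_one_of_le₀ (hr_gt u).le (hr_pos u).le
      nlinarith [Real.exp_pos (-(1/(2*k)) * u ^ 2), abs_nonneg (u / r u)]
  rw [integral_add hgauss_int hodd_int]
  have hodd_zero : ∫ u : ℝ, Real.exp (-(1/(2*k)) * u ^ 2) * (u / r u) = 0 := by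
    set o : ℝ → ℝ := fun u => Real.exp (-(1/(2*k)) * u ^ 2) * (u / r u) with ho
    have hneg : ∀ u : ℝ, o (-u) = -o u := by
      intro u
      simp only [ho, hr_def]
      rw [neg_pow, neg_div]
      ring_nf
    have h1 : ∫ u : ℝ, o (-u) = ∫ u : ℝ, o u := integral_neg_eq_self o volume
    simp_rw [hneg, integral_neg] at h1
    linarith
  rw [hodd_zero, add_zero]
  have hgauss : ∫ u : ℝ, Real.exp (-(1/(2*k)) * u ^ 2) = Real.sqrt (2 * Real.pi * k) := by
    rw [integral_gaussian]
    congr 1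
    field_simp
  rw [hgauss, inv_mul_cancel₀ hsqrt_pos.ne']
end

section
/- For a > 0, ∫₀^∞ exp(-a²/z² - z²) dz = (√π / 2) · e^{-2a}. -/
open Real MeasureTheory

theorem gaussian_type_integral (a : ℝ) (ha : 0 < a) :
    ∫ z in Set.Ioi (0:ℝ), Real.exp (-(a / z)^2 - z^2)
      = (Real.sqrt Real.pi / 2) * Real.exp (-2 * a) := by
  set φ : ℝ → ℝ := fun u => (u + Real.sqrt (u ^ 2 + 4 * a)) / 2 with hφ
  have hs : ∀ u : ℝ, 0 < u ^ 2 + 4 * a := fun u => by positivity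
  have hsq : ∀ u : ℝ, |u| < Real.sqrt (u ^ 2 + 4 * a) := by
    intro u
    rw [← Real.sqrt_sq_eq_abs]
    exact Real.sqrt_lt_sqrt (sq_nonneg u) (by linarith)
  have hφpos : ∀ u : ℝ, 0 < φ u := by
    intro u
    simp only [hφ]
    nlinarith [hsq u, neg_abs_le u]
  have hkey : ∀ u : ℝ, φ u - a / φ u = u := by
    intro u
    have hp := hφpos u
    have hsqv : Real.sqrt (u ^ 2 + 4 * a) ^ 2 = u ^ 2 + 4 * a :=
      Real.sq_sqrt (hs u).le
    have hquad : φ u ^ 2 = u * φ u + a := by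
      simp only [hφ]
      nlinarith [hsqv]
    rw [sub_eq_iff_eq_add]
    field_simp
    nlinarith [hquad]
  set φ' : ℝ → ℝ := fun u => (1 + u / Real.sqrt (u ^ 2 + 4 * a)) / 2 with hφ'
  have hderiv : ∀ u : ℝ, HasDerivAt φ (φ' u) u := by
    intro u
    have h1 : HasDerivAt (fun u : ℝ => u ^ 2 + 4 * a) (2 * u) u := by
      simpa using ((hasDerivAt_pow 2 u).add_const (4 * a))
    have h2 : HasDerivAt (fun u : ℝ => Real.sqrt (u ^ 2 + 4 * a))
        (2 * u / (2 * Real.sqrt (u ^ 2 + 4 * a))) u :=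
      h1.sqrt (hs u).ne'
    have h3 := ((hasDerivAt_id u).add h2).div_const 2
    convert h3 using 1
    · rfl
    · rfl
    · rfl
    have h4 : Real.sqrt (u ^ 2 + 4 * a) ≠ 0 := (Real.sqrt_pos.mpr (hs u)).ne'
    simp only [hφ']
    field_simp
  have hφ'pos : ∀ u : ℝ, 0 < φ' u := by
    intro u
    have h4 : 0 < Real.sqrt (u ^ 2 + 4 * a) := Real.sqrt_pos.mpr (hs u)
    have h6 : u / Real.sqrt (u ^ 2 + 4 * a) > -1 := by
      rw [gt_iff_lt, neg_lt, ← neg_div, div_lt_one h4]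
      calc -u ≤ |u| := neg_le_abs u
        _ < _ := hsq u
    simp only [hφ']
    linarith
  have hinj : Function.Injective φ := by
    intro u v huv
    have h := hkey u
    rw [huv, hkey v] at h
    exact h.symm
  have himg : φ '' Set.univ = Set.Ioi (0:ℝ) := by
    apply Set.eq_of_subset_of_subset
    · rintro _ ⟨u, -, rfl⟩; exact hφpos u
    · rintro z hz
      rw [Set.mem_Ioi] at hz
      refine ⟨z - a / z, Set.mem_univ _, ?_⟩
      have h1 : (z - a / z) ^ 2 + 4 * a = (z + a / z) ^ 2 := by
        field_simp; ring
      have h2 : Real.sqrt ((z - a / z) ^ 2 + 4 * a) = z + a / z := by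
        rw [h1, Real.sqrt_sq (by positivity)]
      simp only [hφ, h2]
      field_simp
      ring
  have hcong : ∫ z in Set.Ioi (0:ℝ), Real.exp (-(a / z)^2 - z^2)
      = ∫ z in Set.Ioi (0:ℝ), Real.exp (-2 * a) * Real.exp (-(z - a / z) ^ 2) := by
    apply setIntegral_congr_fun measurableSet_Ioi
    intro z hz
    rw [Set.mem_Ioi] at hz
    show Real.exp (-(a / z)^2 - z^2) = Real.exp (-2 * a) * Real.exp (-(z - a / z) ^ 2)
    rw [← Real.exp_add]
    congr 1
    field_simp [hz.ne']
    ring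
  rw [hcong, integral_const_mul]
  have hcov : ∫ z in Set.Ioi (0:ℝ), Real.exp (-(z - a / z) ^ 2)
      = ∫ u : ℝ, |φ' u| * Real.exp (-u ^ 2) := by
    rw [← himg]
    rw [integral_image_eq_integral_abs_deriv_smul MeasurableSet.univ
      (fun x _ => (hderiv x).hasDerivWithinAt) (hinj.injOn) _]
    simp only [smul_eq_mul, hkey]
    rw [setIntegral_univ]
  rw [hcov]
  have hsplit : ∀ u : ℝ, |φ' u| * Real.exp (-u ^ 2)
      = (1/2) * Real.exp (-u ^ 2)
        + (u / Real.sqrt (u ^ 2 + 4 * a) / 2) * Real.exp (-u ^ 2) := by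
    intro u
    rw [abs_of_pos (hφ'pos u)]
    simp only [hφ']
    ring
  simp only [hsplit]
  have hint1 : Integrable (fun u : ℝ => (1/2 : ℝ) * Real.exp (-u ^ 2)) := by
    have := integrable_exp_neg_mul_sq (one_pos : (0:ℝ) < 1)
    simpa using this.const_mul (1/2 : ℝ)
  have hbound : ∀ u : ℝ, ‖(u / Real.sqrt (u ^ 2 + 4 * a) / 2) * Real.exp (-u ^ 2)‖
      ≤ ‖(1/2 : ℝ) * Real.exp (-u ^ 2)‖ := by
    intro u
    have h4 : 0 < Real.sqrt (u ^ 2 + 4 * a) := Real.sqrt_pos.mpr (hs u)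
    simp only [norm_mul, Real.norm_eq_abs, Real.abs_exp]
    apply mul_le_mul_of_nonneg_right _ (Real.exp_nonneg _)
    rw [abs_div, abs_div, abs_of_pos h4, abs_of_pos (two_pos : (0:ℝ) < 2),
      abs_of_pos (by norm_num : (0:ℝ) < 1/2)]
    have : |u| / Real.sqrt (u ^ 2 + 4 * a) ≤ 1 := by
      rw [div_le_one h4]; exact (hsq u).le
    linarith
  have hint2 : Integrable
      (fun u : ℝ => (u / Real.sqrt (u ^ 2 + 4 * a) / 2) * Real.exp (-u ^ 2)) := by
    apply hint1.mono _ (Filter.Eventually.of_forall hbound)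
    apply Measurable.aestronglyMeasurable
    fun_prop
  rw [integral_add hint1 hint2]
  have hodd : ∫ u : ℝ, (u / Real.sqrt (u ^ 2 + 4 * a) / 2) * Real.exp (-u ^ 2) = 0 := by
    have h := integral_neg_eq_self
      (fun u : ℝ => (u / Real.sqrt (u ^ 2 + 4 * a) / 2) * Real.exp (-u ^ 2)) volume
    have h2 : ∀ u : ℝ, (-u / Real.sqrt ((-u) ^ 2 + 4 * a) / 2) * Real.exp (-(-u) ^ 2)
        = -((u / Real.sqrt (u ^ 2 + 4 * a) / 2) * Real.exp (-u ^ 2)) := by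
      intro u; rw [neg_pow, neg_pow]; ring_nf
    simp only [h2] at h
    rw [integral_neg] at h
    linarith
  rw [hodd, add_zero, integral_const_mul]
  have hg : ∫ u : ℝ, Real.exp (-u ^ 2) = Real.sqrt Real.pi := by
    have := integral_gaussian 1
    simpa using this
  rw [hg]
  ring
end

section
/- If X has density f(x) = (2πkx)^{-1/2} exp(-(x-μ)²/(2kx)) on (0,∞) with k, μ > 0, then E(1/X) = 1/μ, i.e., ∫₀^∞ (1/x) f(x) dx = 1/μ. -/
open Real MeasureTheory

open Set in
-- Step A: symmetry substitution
lemma symm_step (k μ : ℝ) (hk : 0 < k) (hμ : 0 < μ) :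
    ∫ x in Set.Ioi (0:ℝ),
      (1 / x) * ((Real.sqrt (2 * Real.pi * k * x))⁻¹ * Real.exp (-(x - μ)^2 / (2 * k * x)))
    = (1/μ) * ∫ x in Set.Ioi (0:ℝ),
      (Real.sqrt (2 * Real.pi * k * x))⁻¹ * Real.exp (-(x - μ)^2 / (2 * k * x)) := by
  have himg : (fun y : ℝ => μ^2 / y) '' Set.Ioi 0 = Set.Ioi 0 := by
    ext x
    constructor
    · rintro ⟨y, hy, rfl⟩
      exact div_pos (pow_pos hμ 2) hy
    · intro hx
      have hx0 : (0:ℝ) < x := hx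
      exact ⟨μ^2/x, div_pos (pow_pos hμ 2) hx0, by field_simp⟩
  have hderiv : ∀ y ∈ Set.Ioi (0:ℝ),
      HasDerivWithinAt (fun y : ℝ => μ^2 / y) (-(μ^2) / y^2) (Set.Ioi 0) y := by
    intro y hy
    have hy0 : (0:ℝ) < y := hy
    have := (hasDerivAt_inv hy0.ne').const_mul (μ^2)
    have heq : μ^2 * (-(y^2)⁻¹) = -(μ^2)/y^2 := by field_simp
    simpa [div_eq_mul_inv, heq] using this.hasDerivWithinAt
  have hinj : Set.InjOn (fun y : ℝ => μ^2 / y) (Set.Ioi 0) := by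
    intro a ha b hb h
    have ha0 : (0:ℝ) < a := ha
    have hb0 : (0:ℝ) < b := hb
    field_simp at h
    nlinarith [h]
  rw [← MeasureTheory.integral_const_mul]
  conv_lhs => rw [← himg]
  rw [integral_image_eq_integral_abs_deriv_smul measurableSet_Ioi hderiv hinj]
  apply setIntegral_congr_fun measurableSet_Ioi
  intro y hy
  have hy0 : (0:ℝ) < y := hy
  have hsy : 0 < Real.sqrt (2*Real.pi*k*y) := Real.sqrt_pos.2 (by positivity)
  have h1 : Real.sqrt (2*Real.pi*k*(μ^2/y)) = Real.sqrt (2*Real.pi*k*y) * (μ/y) := by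
    rw [← Real.sqrt_sq (le_of_lt (div_pos hμ hy0)), ← Real.sqrt_mul (by positivity)]
    congr 1
    field_simp
  have h2 : -(μ^2/y - μ)^2 / (2*k*(μ^2/y)) = -(y-μ)^2/(2*k*y) := by
    rw [div_eq_div_iff (by positivity) (by positivity)]
    field_simp
    ring
  simp only [smul_eq_mul, h1, h2]
  rw [show |(-(μ^2)/y^2)| = μ^2/y^2 by
    rw [abs_div, abs_neg, abs_of_nonneg (sq_nonneg μ), abs_of_nonneg (sq_nonneg y)]]
  field_simp

noncomputable def ψ (k μ : ℝ) (x : ℝ) : ℝ := (x - μ) / Real.sqrt (2*k*x)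
noncomputable def ψ' (k μ : ℝ) (x : ℝ) : ℝ := (x + μ) / (2 * x * Real.sqrt (2*k*x))

lemma psi_deriv (k μ : ℝ) (hk : 0 < k) : ∀ x ∈ Set.Ioi (0:ℝ),
    HasDerivWithinAt (ψ k μ) (ψ' k μ x) (Set.Ioi 0) x := by
  intro x hx
  have hx0 : (0:ℝ) < x := hx
  have h2kx : 0 < 2*k*x := by positivity
  set s := Real.sqrt (2*k*x) with hsdef
  have hs : 0 < s := Real.sqrt_pos.2 h2kx
  have hsq : s ^ 2 = 2*k*x := Real.sq_sqrt h2kx.le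
  have d1 : HasDerivAt (fun x : ℝ => Real.sqrt (2*k*x)) (1/(2*s) * (2*k)) x := by
    have hinner : HasDerivAt (fun x : ℝ => 2*k*x) (2*k) x := by
      simpa using (hasDerivAt_id x).const_mul (2*k)
    exact (Real.hasDerivAt_sqrt h2kx.ne').comp x hinner
  have d2 : HasDerivAt (ψ k μ)
      ((1 * s - (x - μ) * (1/(2*s) * (2*k))) / s^2) x :=
    HasDerivAt.div ((hasDerivAt_id x).sub_const μ) d1 hs.ne'
  have heq : (1 * s - (x - μ) * (1/(2*s) * (2*k))) / s^2 = ψ' k μ x := by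
    rw [ψ', ← hsdef]
    field_simp
    linear_combination (x - μ) * hsq
  exact (heq ▸ d2).hasDerivWithinAt

lemma psi_inj (k μ : ℝ) (hk : 0 < k) (hμ : 0 < μ) : Set.InjOn (ψ k μ) (Set.Ioi 0) := by
  have hmono : StrictMonoOn (ψ k μ) (Set.Ioi 0) := by
    apply strictMonoOn_of_hasDerivWithinAt_pos (convex_Ioi 0) (f' := ψ' k μ)
    · exact fun x hx => ((psi_deriv k μ hk) x hx).continuousWithinAt
    · rw [interior_Ioi]; exact psi_deriv k μ hk
    · rw [interior_Ioi]
      intro x hx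
      have hx0 : (0:ℝ) < x := hx
      have : 0 < Real.sqrt (2*k*x) := Real.sqrt_pos.2 (by positivity)
      rw [ψ']
      positivity
  exact hmono.injOn

lemma psi_surj (k μ : ℝ) (hk : 0 < k) (hμ : 0 < μ) : ψ k μ '' Set.Ioi 0 = Set.univ := by
  apply Set.eq_univ_of_forall
  intro t
  set b : ℝ := t * Real.sqrt (2*k) with hb
  set d : ℝ := Real.sqrt (2*k*t^2 + 4*μ) with hd
  have hd0 : 0 ≤ d := Real.sqrt_nonneg _
  have hd2 : d^2 = 2*k*t^2 + 4*μ := Real.sq_sqrt (by positivity)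
  have hb2 : b^2 = 2*k*t^2 := by
    rw [hb, mul_pow, Real.sq_sqrt (by positivity : (0:ℝ) ≤ 2*k)]; ring
  set s : ℝ := (b + d)/2 with hs
  have hspos : 0 < s := by
    rw [hs]
    nlinarith [hd2, hb2, hd0, hμ, sq_nonneg (b+d)]
  refine ⟨s^2, by simpa using pow_pos hspos 2, ?_⟩
  have hsk : 0 < Real.sqrt (2*k) := Real.sqrt_pos.2 (by positivity)
  have hsqrt : Real.sqrt (2*k*s^2) = Real.sqrt (2*k) * s := by
    rw [Real.sqrt_mul (by positivity : (0:ℝ) ≤ 2*k), Real.sqrt_sq hspos.le]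
  rw [ψ, hsqrt, div_eq_iff (by positivity)]
  rw [hs]
  linear_combination (hd2 - hb2)/4 + ((b+d)/2) * hb

lemma gauss_step (k μ : ℝ) (hk : 0 < k) (hμ : 0 < μ) :
    ∫ x in Set.Ioi (0:ℝ), |ψ' k μ x| * Real.exp (-(ψ k μ x)^2) = Real.sqrt Real.pi := by
  have h := integral_image_eq_integral_abs_deriv_smul (f := ψ k μ) measurableSet_Ioi
    (psi_deriv k μ hk) (psi_inj k μ hk hμ) (fun t => Real.exp (-t^2))
  rw [psi_surj k μ hk hμ, Measure.restrict_univ] at h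
  simp only [smul_eq_mul] at h
  rw [← h]
  simpa using integral_gaussian 1

lemma pointwise_eq (k μ : ℝ) (hk : 0 < k) (hμ : 0 < μ) : ∀ x ∈ Set.Ioi (0:ℝ),
    |ψ' k μ x| * Real.exp (-(ψ k μ x)^2)
    = Real.sqrt Real.pi * ((x+μ)/(2*x) * ((Real.sqrt (2*Real.pi*k*x))⁻¹ * Real.exp (-(x-μ)^2/(2*k*x)))) := by
  intro x hx
  have hx0 : (0:ℝ) < x := hx
  have h2kx : 0 < 2*k*x := by positivity
  set s := Real.sqrt (2*k*x) with hsdef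
  have hs : 0 < s := Real.sqrt_pos.2 h2kx
  have hsq : s ^ 2 = 2*k*x := Real.sq_sqrt h2kx.le
  have hπ : 0 < Real.sqrt Real.pi := Real.sqrt_pos.2 Real.pi_pos
  have hexp : Real.exp (-(ψ k μ x)^2) = Real.exp (-(x-μ)^2/(2*k*x)) := by
    congr 1
    rw [ψ, ← hsdef, div_pow, hsq]
    ring
  have hsplit : Real.sqrt (2*Real.pi*k*x) = Real.sqrt Real.pi * s := by
    rw [hsdef, ← Real.sqrt_mul Real.pi_pos.le]
    congr 1; ring
  have habs : |ψ' k μ x| = (x+μ)/(2*x*s) := by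
    rw [ψ', ← hsdef, abs_of_pos (by positivity)]
  rw [hexp, hsplit, habs]
  field_simp

theorem unlikely_density_harmonic_mean (k μ : ℝ) (hk : 0 < k) (hμ : 0 < μ) :
    ∫ x in Set.Ioi (0:ℝ),
      (1 / x) * ((Real.sqrt (2 * Real.pi * k * x))⁻¹ * Real.exp (-(x - μ)^2 / (2 * k * x)))
      = 1 / μ := by
  set h : ℝ → ℝ := fun x => (Real.sqrt (2 * Real.pi * k * x))⁻¹ * Real.exp (-(x - μ)^2 / (2 * k * x)) with hh
  set F : ℝ → ℝ := fun x => (x+μ)/(2*x) * h x with hF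
  have hπ : 0 < Real.sqrt Real.pi := Real.sqrt_pos.2 Real.pi_pos
  have hpos : ∀ x : ℝ, 0 ≤ h x := by
    intro x; rw [hh]; positivity
  -- integral of F is 1
  have hFint : ∫ x in Set.Ioi (0:ℝ), F x = 1 := by
    have h1 : ∫ x in Set.Ioi (0:ℝ), |ψ' k μ x| * Real.exp (-(ψ k μ x)^2)
        = ∫ x in Set.Ioi (0:ℝ), Real.sqrt Real.pi * F x :=
      setIntegral_congr_fun measurableSet_Ioi (pointwise_eq k μ hk hμ)
    rw [gauss_step k μ hk hμ, MeasureTheory.integral_const_mul] at h1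
    have h2 : Real.sqrt Real.pi * 1 = Real.sqrt Real.pi * ∫ x in Set.Ioi (0:ℝ), F x := by
      rw [mul_one]; exact h1
    exact (mul_left_cancel₀ hπ.ne' h2).symm
  -- integrability of F
  have hFmeas : IntegrableOn F (Set.Ioi 0) := by
    have key := (integrableOn_image_iff_integrableOn_abs_deriv_smul (f := ψ k μ)
      measurableSet_Ioi (psi_deriv k μ hk) (psi_inj k μ hk hμ) (fun t => Real.exp (-t^2))).1
    rw [psi_surj k μ hk hμ] at key
    have hg : IntegrableOn (fun t : ℝ => Real.exp (-t^2)) Set.univ := by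
      rw [integrableOn_univ]
      simpa using integrable_exp_neg_mul_sq (b := 1) one_pos
    have key2 := key hg
    simp only [smul_eq_mul] at key2
    have key3 : IntegrableOn (fun x => Real.sqrt Real.pi * F x) (Set.Ioi 0) :=
      key2.congr_fun (pointwise_eq k μ hk hμ) measurableSet_Ioi
    have key4 := key3.const_mul (Real.sqrt Real.pi)⁻¹
    apply IntegrableOn.congr_fun key4 ?_ measurableSet_Ioi
    intro x _
    simp only
    rw [← mul_assoc, inv_mul_cancel₀ hπ.ne', one_mul]
  -- measurability of h
  have hmeas : Measurable h := by
    rw [hh]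
    have m1 : Measurable fun x : ℝ => (Real.sqrt (2*Real.pi*k*x))⁻¹ :=
      (Real.continuous_sqrt.measurable.comp (measurable_id.const_mul (2*Real.pi*k))).inv
    have m2 : Measurable fun x : ℝ => Real.exp (-(x - μ)^2/(2*k*x)) :=
      Real.measurable_exp.comp
        ((((measurable_id.sub_const μ).pow_const 2).neg).div (measurable_id.const_mul (2*k)))
    exact m1.mul m2
  -- integrability of pieces
  have hint1 : IntegrableOn (fun x => (1/2) * h x) (Set.Ioi 0) := by
    apply Integrable.mono' hFmeas ((hmeas.const_mul _).aestronglyMeasurable)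
    rw [ae_restrict_iff' measurableSet_Ioi]
    apply ae_of_all
    intro x hx
    have hx0 : (0:ℝ) < x := hx
    rw [Real.norm_eq_abs, abs_of_nonneg (by positivity)]
    rw [hF]
    have : (1:ℝ)/2 ≤ (x+μ)/(2*x) := by
      rw [div_le_div_iff₀ (by norm_num) (by positivity)]
      nlinarith
    exact mul_le_mul_of_nonneg_right this (hpos x)
  have hint2 : IntegrableOn (fun x => (μ/(2*x)) * h x) (Set.Ioi 0) := by
    apply Integrable.mono' hFmeas ?_ ?_
    · exact ((measurable_const.div (measurable_id.const_mul 2)).mul hmeas).aestronglyMeasurable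
    rw [ae_restrict_iff' measurableSet_Ioi]
    apply ae_of_all
    intro x hx
    have hx0 : (0:ℝ) < x := hx
    rw [Real.norm_eq_abs, abs_of_nonneg (by positivity)]
    rw [hF]
    have : μ/(2*x) ≤ (x+μ)/(2*x) := by gcongr; linarith
    exact mul_le_mul_of_nonneg_right this (hpos x)
  -- split the integral
  have hsplit : ∫ x in Set.Ioi (0:ℝ), F x
      = (∫ x in Set.Ioi (0:ℝ), (1/2) * h x) + ∫ x in Set.Ioi (0:ℝ), (μ/(2*x)) * h x := by
    rw [← MeasureTheory.integral_add hint1 hint2]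
    apply setIntegral_congr_fun measurableSet_Ioi
    intro x hx
    have hx0 : (0:ℝ) < x := hx
    rw [hF]
    field_simp
  have e1 : ∫ x in Set.Ioi (0:ℝ), (1/2) * h x = (1/2) * ∫ x in Set.Ioi (0:ℝ), h x :=
    MeasureTheory.integral_const_mul _ _
  have e2 : ∫ x in Set.Ioi (0:ℝ), (μ/(2*x)) * h x
      = (μ/2) * ∫ x in Set.Ioi (0:ℝ), (1/x) * h x := by
    rw [← MeasureTheory.integral_const_mul]
    congr 1
    funext x
    rw [div_eq_mul_inv μ, div_eq_mul_inv (1:ℝ), mul_inv]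
    ring
  have hsymm := symm_step k μ hk hμ
  set I1 : ℝ := ∫ x in Set.Ioi (0:ℝ), h x with hI1
  set I2 : ℝ := ∫ x in Set.Ioi (0:ℝ), (1/x) * h x with hI2
  rw [hFint, e1, e2] at hsplit
  -- hsymm : I2 = (1/μ) * I1
  have hI1eq : I1 = μ * I2 := by
    rw [hsymm]; field_simp
  rw [hI1eq] at hsplit
  rw [show (1:ℝ)/2 * (μ * I2) + μ/2 * I2 = μ * I2 by ring] at hsplit
  field_simp
  linarith
end

section
/- If X has density f(x) = (2πkx)^{-1/2} exp(-(x-μ)²/(2kx)) on (0,∞) with k, μ > 0, then E(X) = k + μ. -/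
open Real MeasureTheory Set

lemma integrable_sq_mul_exp_neg_mul_sq {b : ℝ} (hb : 0 < b) :
    Integrable (fun x : ℝ => x ^ 2 * Real.exp (-b * x ^ 2)) := by
  have h := integrable_rpow_mul_exp_neg_mul_sq hb (s := 2) (by norm_num)
  have he : (fun x : ℝ => x ^ (2:ℝ) * Real.exp (-b * x ^ 2))
      = fun x : ℝ => x ^ 2 * Real.exp (-b * x ^ 2) := by
    funext x
    rw [show (2:ℝ) = ((2:ℕ):ℝ) by norm_num, Real.rpow_natCast]
  rwa [he] at h

lemma integral_sq_mul_exp_neg_mul_sq {b : ℝ} (hb : 0 < b) :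
    ∫ x : ℝ, x ^ 2 * Real.exp (-b * x ^ 2) = Real.sqrt (π / b) / (2 * b) := by
  have hint := integrable_sq_mul_exp_neg_mul_sq hb
  have heq : ∫ x in Iic (0:ℝ), x ^ 2 * Real.exp (-b * x ^ 2)
      = ∫ x in Ioi (0:ℝ), x ^ 2 * Real.exp (-b * x ^ 2) := by
    rw [show (0:ℝ) = -0 by norm_num, ← integral_comp_neg_Ioi]
    norm_num
  have hsplit : ∫ x : ℝ, x ^ 2 * Real.exp (-b * x ^ 2)
      = 2 * ∫ x in Ioi (0:ℝ), x ^ 2 * Real.exp (-b * x ^ 2) := by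
    rw [← intervalIntegral.integral_Iic_add_Ioi hint.integrableOn hint.integrableOn, heq]
    ring
  have hIoi : ∫ x in Ioi (0:ℝ), x ^ 2 * Real.exp (-b * x ^ 2)
      = (1/2) * ((1/b) ^ ((3:ℝ)/2) * Real.Gamma (3/2)) := by
    have h := integral_comp_rpow_Ioi_of_pos
      (g := fun t : ℝ => (1/2) * (t ^ ((3:ℝ)/2 - 1) * Real.exp (-(b * t)))) (p := 2) two_pos
    have h2 : ∫ x in Ioi (0:ℝ), ((2:ℝ) * x ^ ((2:ℝ) - 1)) •
        ((1/2) * ((x ^ (2:ℝ)) ^ ((3:ℝ)/2 - 1) * Real.exp (-(b * x ^ (2:ℝ)))))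
        = ∫ x in Ioi (0:ℝ), x ^ 2 * Real.exp (-b * x ^ 2) := by
      refine setIntegral_congr_fun measurableSet_Ioi (fun x hx => ?_)
      have hx0 : (0:ℝ) < x := hx
      rw [show ((2:ℝ) - 1) = 1 by norm_num, Real.rpow_one,
        show ((3:ℝ)/2 - 1) = 1/2 by norm_num,
        show (x : ℝ) ^ (2:ℝ) = x ^ 2 by
          rw [show (2:ℝ) = ((2:ℕ):ℝ) by norm_num, Real.rpow_natCast],
        show ((x ^ 2 : ℝ)) ^ ((1:ℝ)/2) = x by
          rw [← Real.sqrt_eq_rpow, Real.sqrt_sq hx0.le]]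
      simp only [smul_eq_mul]
      ring_nf
    rw [h2] at h
    rw [h, MeasureTheory.integral_const_mul,
      integral_rpow_mul_exp_neg_mul_Ioi (by norm_num : (0:ℝ) < 3/2) hb]
  have hG : Real.Gamma (3/2) = Real.sqrt π / 2 := by
    rw [show (3:ℝ)/2 = 1/2 + 1 by norm_num, Real.Gamma_add_one (by norm_num),
      Real.Gamma_one_half_eq]
    ring
  rw [hsplit, hIoi, hG,
    show ((1:ℝ)/b) ^ ((3:ℝ)/2) = (1/b) * Real.sqrt (1/b) by
      rw [show ((3:ℝ)/2) = 1 + 1/2 by norm_num, Real.rpow_add (by positivity),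
        Real.rpow_one, ← Real.sqrt_eq_rpow],
    show π / b = π * (1/b) by ring, Real.sqrt_mul pi_pos.le]
  field_simp

theorem unlikely_density_mean (k μ : ℝ) (hk : 0 < k) (hμ : 0 < μ) :
    ∫ x in Set.Ioi (0:ℝ),
      x * ((Real.sqrt (2 * Real.pi * k * x))⁻¹ * Real.exp (-(x - μ)^2 / (2 * k * x)))
      = k + μ := by
  set g : ℝ → ℝ := fun x =>
    x * ((Real.sqrt (2 * Real.pi * k * x))⁻¹ * Real.exp (-(x - μ)^2 / (2 * k * x))) with hg
  set s : ℝ → ℝ := fun u => Real.sqrt (u^2 + 4*μ) with hsdef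
  have hs_pos : ∀ u, 0 < s u := fun u => Real.sqrt_pos.2 (by positivity)
  have hs_sq : ∀ u, s u ^ 2 = u^2 + 4*μ := fun u => Real.sq_sqrt (by positivity)
  have hs_gt : ∀ u, |u| < s u := by
    intro u
    rw [hsdef]
    exact (Real.lt_sqrt (abs_nonneg u)).2 (by rw [sq_abs]; linarith)
  set ψ : ℝ → ℝ := fun u => (u + s u)/2 with hψdef
  have hψ_pos : ∀ u, 0 < ψ u := by
    intro u
    have h1 := hs_gt u
    have h2 := neg_abs_le u
    simp only [hψdef]
    linarith
  have key : ∀ u, ψ u ^ 2 = u * ψ u + μ := by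
    intro u
    simp only [hψdef]
    linear_combination (hs_sq u)/4
  set f : ℝ → ℝ := fun u => ψ u ^ 2 with hfdef
  set f' : ℝ → ℝ := fun u => 2 * ψ u ^ 2 / s u with hf'def
  have hderiv : ∀ u, HasDerivAt f (f' u) u := by
    intro u
    have h1 : HasDerivAt (fun v : ℝ => v^2 + 4*μ) (2*u) u := by
      simpa using ((hasDerivAt_pow 2 u).add_const (4*μ))
    have h2 : HasDerivAt s (u / s u) u := by
      have := (Real.hasDerivAt_sqrt (by positivity : u^2 + 4*μ ≠ 0)).comp u h1
      simpa only [hsdef, Function.comp_def] using this.congr_deriv (by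
        field_simp)
    have h3 : HasDerivAt ψ ((1 + u / s u)/2) u := by
      simpa only [hψdef, Pi.add_apply, id_eq] using ((hasDerivAt_id u).add h2).div_const 2
    have h4 := h3.pow 2
    simp only [hfdef, hf'def]
    refine h4.congr_deriv ?_
    have hsu := (hs_pos u).ne'
    have h2ψ : u + s u = 2 * ψ u := by simp only [hψdef]; ring
    field_simp
    try ring_nf
    try nlinarith [hs_sq u, hs_pos u, hψ_pos u]
  have hinj : Set.InjOn f Set.univ := by
    intro a _ c _ h
    simp only [hfdef] at h
    have hψac : ψ a = ψ c := by
      have h0 : (ψ a - ψ c) * (ψ a + ψ c) = 0 := by linear_combination h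
      rcases mul_eq_zero.1 h0 with h1 | h1
      · linarith
      · nlinarith [hψ_pos a, hψ_pos c]
    have h2 : a * ψ a = c * ψ a := by
      have ka := key a; have kc := key c
      rw [hψac] at *
      linarith
    exact mul_right_cancel₀ (hψ_pos a).ne' h2
  have himg : f '' Set.univ = Set.Ioi (0:ℝ) := by
    apply Set.Subset.antisymm
    · rintro x ⟨u, -, rfl⟩
      exact pow_pos (hψ_pos u) 2
    · intro x hx
      have hx0 : (0:ℝ) < x := hx
      set r := Real.sqrt x with hr
      have hr0 : 0 < r := Real.sqrt_pos.2 hx0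
      have hr2 : r ^ 2 = x := Real.sq_sqrt hx0.le
      refine ⟨(x - μ)/r, trivial, ?_⟩
      have hs_val : s ((x - μ)/r) = (x + μ)/r := by
        show Real.sqrt (((x - μ)/r)^2 + 4*μ) = (x + μ)/r
        have : ((x - μ)/r)^2 + 4*μ = ((x + μ)/r)^2 := by
          field_simp
          linear_combination (4*μ) * hr2
        rw [this, Real.sqrt_sq (by positivity)]
      simp only [hfdef, hψdef, hs_val]
      field_simp
      linear_combination (-4*x) * hr2
  have hb : (0:ℝ) < (2*k)⁻¹ := by positivity
  have hsqrtk : (0:ℝ) < Real.sqrt (2*π*k) := Real.sqrt_pos.2 (by positivity)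
  set E : ℝ → ℝ := fun u => Real.exp (-(2*k)⁻¹ * u^2) with hEdef
  set A : ℝ → ℝ := fun u => (Real.sqrt (2*π*k))⁻¹ * ((u^2 + μ) * E u) with hAdef
  set B : ℝ → ℝ := fun u => (Real.sqrt (2*π*k))⁻¹ * (((u^3 + 3*μ*u)/s u) * E u) with hBdef
  have hsub : ∫ x in Set.Ioi (0:ℝ), g x = ∫ u : ℝ, |f' u| • g (f u) := by
    rw [← himg, integral_image_eq_integral_abs_deriv_smul MeasurableSet.univ
      (fun u _ => (hderiv u).hasDerivWithinAt) hinj g, setIntegral_univ]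
  have hptwise : ∀ u : ℝ, |f' u| • g (f u) = A u + B u := by
    intro u
    have hψu := hψ_pos u
    have hsu := hs_pos u
    have hexp : -(f u - μ)^2 / (2 * k * f u) = -(2*k)⁻¹ * u^2 := by
      have h1 : f u - μ = u * ψ u := by
        have := key u; simp only [hfdef]; linarith
      rw [h1]
      simp only [hfdef]
      rw [div_eq_iff (by positivity)]
      field_simp
    have hsqrt : Real.sqrt (2 * π * k * f u) = Real.sqrt (2*π*k) * ψ u := by
      simp only [hfdef]
      rw [Real.sqrt_mul (by positivity), Real.sqrt_sq hψu.le]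
    have hcube : (u + s u)^3 = 4*(u^2+μ)*(s u) + 4*(u^3+3*μ*u) := by
      linear_combination (3*u + s u) * hs_sq u
    have habs : |f' u| = 2 * ψ u ^ 2 / s u := by
      apply abs_of_pos
      simp only [hf'def]
      positivity
    have hkey2 : 2 * ψ u ^ 3 = (u^2 + μ) * s u + (u^3 + 3*μ*u) := by
      simp only [hψdef]
      linear_combination ((3*u + s u)/4) * hs_sq u
    simp only [hg, smul_eq_mul]
    rw [habs, hexp, hsqrt]
    simp only [hAdef, hBdef, hEdef, hfdef]
    have hsun : s u ≠ 0 := hsu.ne'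
    have hψun : ψ u ≠ 0 := hψu.ne'
    have hsqn : Real.sqrt (2*π*k) ≠ 0 := hsqrtk.ne'
    generalize Real.exp (-(2*k)⁻¹ * u^2) = X
    generalize hC : Real.sqrt (2*π*k) = C at hsqn ⊢
    calc 2 * ψ u ^ 2 / s u * (ψ u ^ 2 * ((C * ψ u)⁻¹ * X))
        = 2 * ψ u ^ 3 * X / (s u * C) := by
          field_simp
      _ = ((u ^ 2 + μ) * s u + (u ^ 3 + 3 * μ * u)) * X / (s u * C) := by rw [hkey2]
      _ = C⁻¹ * ((u ^ 2 + μ) * X) + C⁻¹ * ((u ^ 3 + 3 * μ * u) / s u * X) := by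
          field_simp
  have hEint : Integrable E := integrable_exp_neg_mul_sq hb
  have hsqint : Integrable (fun u : ℝ => u^2 * E u) := integrable_sq_mul_exp_neg_mul_sq hb
  have habsint : Integrable (fun u : ℝ => |u| * E u) := by
    have h := (integrable_mul_exp_neg_mul_sq hb).abs
    have he : (fun u : ℝ => |u * Real.exp (-(2*k)⁻¹ * u^2)|) = fun u : ℝ => |u| * E u := by
      funext u
      rw [abs_mul, abs_of_pos (Real.exp_pos _)]
    rwa [he] at h
  have hAint : Integrable A := by
    have he : A = fun u : ℝ => (Real.sqrt (2*π*k))⁻¹ * (u^2 * E u)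
        + ((Real.sqrt (2*π*k))⁻¹ * μ) * E u := by
      funext u; simp only [hAdef]; ring
    rw [he]
    exact (hsqint.const_mul _).add (hEint.const_mul _)
  have hs_cont : Continuous s := by
    simp only [hsdef]
    exact Real.continuous_sqrt.comp ((continuous_pow 2).add continuous_const)
  have hBint : Integrable B := by
    apply Integrable.const_mul
    apply Integrable.mono (hsqint.add (habsint.const_mul ((3/2) * Real.sqrt μ)))
    · apply Continuous.aestronglyMeasurable
      apply Continuous.mul
      · exact (continuous_pow 3 |>.add (continuous_const.mul continuous_id)).div hs_cont
          (fun u => (hs_pos u).ne')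
      · simp only [hEdef]
        exact Real.continuous_exp.comp (continuous_const.mul (continuous_pow 2))
    · filter_upwards with u
      have hEpos := Real.exp_pos (-(2*k)⁻¹ * u^2)
      have hsu := hs_pos u
      have h2 : |u| ≤ s u := (hs_gt u).le
      have h3 : 2 * Real.sqrt μ ≤ s u := by
        have h4 : Real.sqrt (4*μ) ≤ s u := by
          simp only [hsdef]
          exact Real.sqrt_le_sqrt (by nlinarith [sq_nonneg u])
        have h5 : Real.sqrt (4*μ) = 2 * Real.sqrt μ := by
          rw [show (4:ℝ)*μ = 2^2*μ by ring, Real.sqrt_mul (by positivity),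
            Real.sqrt_sq (by norm_num)]
        linarith
      have h4 : Real.sqrt μ ^ 2 = μ := Real.sq_sqrt hμ.le
      have hq : |(u^3 + 3*μ*u)/s u| ≤ u^2 + (3/2) * Real.sqrt μ * |u| := by
        rw [abs_div, abs_of_pos hsu, div_le_iff₀ hsu]
        have haux : |u^3 + 3*μ*u| ≤ |u|^3 + 3*μ*|u| := by
          calc |u^3 + 3*μ*u| ≤ |u^3| + |3*μ*u| := abs_add_le _ _
            _ = |u|^3 + 3*μ*|u| := by
                rw [abs_pow, abs_mul, abs_mul, abs_of_pos hμ]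
                simp [abs_of_nonneg]
        refine haux.trans ?_
        have hc1 : u^2 * |u| ≤ u^2 * s u := by nlinarith [sq_nonneg u]
        have hc2 : ((3/2) * Real.sqrt μ * |u|) * (2 * Real.sqrt μ)
            ≤ ((3/2) * Real.sqrt μ * |u|) * s u := by
          apply mul_le_mul_of_nonneg_left h3
          positivity
        have hc3 : |u|^3 = u^2 * |u| := by
          rw [pow_succ, sq_abs]
        nlinarith [hc1, hc2, hc3, h4]
      calc ‖(u^3 + 3*μ*u)/s u * E u‖ = |(u^3 + 3*μ*u)/s u| * E u := by
            rw [norm_mul, Real.norm_eq_abs, Real.norm_eq_abs, abs_of_pos hEpos]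
        _ ≤ (u^2 + (3/2) * Real.sqrt μ * |u|) * E u := by
            apply mul_le_mul_of_nonneg_right hq hEpos.le
        _ = u^2 * E u + (3/2) * Real.sqrt μ * (|u| * E u) := by ring
        _ ≤ ‖u^2 * E u + (3/2) * Real.sqrt μ * (|u| * E u)‖ :=
            (le_abs_self _).trans_eq (Real.norm_eq_abs _).symm
  have hBzero : ∫ u : ℝ, B u = 0 := by
    have hneg : ∀ u : ℝ, B (-u) = - B u := by
      intro u
      have hs_neg : s (-u) = s u := by
        simp only [hsdef, neg_sq]
      simp only [hBdef, hEdef, hs_neg, neg_sq]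
      field_simp
      ring
    have h1 : ∫ u : ℝ, B (-u) = ∫ u : ℝ, B u := integral_neg_eq_self B volume
    have h2 : ∫ u : ℝ, B (-u) = - ∫ u : ℝ, B u := by
      simp only [hneg]
      exact integral_neg B
    linarith [h1, h2]
  have hAval : ∫ u : ℝ, A u = k + μ := by
    have hsplit2 : ∫ u : ℝ, A u = (Real.sqrt (2*π*k))⁻¹ *
        ((∫ u : ℝ, u^2 * E u) + μ * (∫ u : ℝ, E u)) := by
      simp only [hAdef]
      rw [MeasureTheory.integral_const_mul]
      congr 1
      have he : (fun u : ℝ => (u^2 + μ) * E u)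
          = fun u : ℝ => u^2 * E u + μ * E u := by funext u; ring
      rw [he, integral_add hsqint (hEint.const_mul μ), MeasureTheory.integral_const_mul]
    have hg1 : ∫ u : ℝ, u^2 * E u = Real.sqrt (π / (2*k)⁻¹) / (2 * (2*k)⁻¹) :=
      integral_sq_mul_exp_neg_mul_sq hb
    have hg2 : ∫ u : ℝ, E u = Real.sqrt (π / (2*k)⁻¹) := integral_gaussian _
    have hπ : Real.sqrt (π / (2*k)⁻¹) = Real.sqrt (2*π*k) := by
      congr 1
      field_simp
    rw [hsplit2, hg1, hg2, hπ]
    have h2k : 2 * (2*k)⁻¹ = k⁻¹ := by field_simp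
    rw [h2k]
    field_simp
  calc ∫ x in Set.Ioi (0:ℝ), g x = ∫ u : ℝ, |f' u| • g (f u) := hsub
    _ = ∫ u : ℝ, (A u + B u) := by simp_rw [hptwise]
    _ = (∫ u : ℝ, A u) + ∫ u : ℝ, B u := integral_add hAint hBint
    _ = k + μ := by rw [hAval, hBzero, add_zero]
end

section
/- For k, μ > 0 and any real t < 1/(2k), the moment generating function of the density f(x) = (2πkx)^{-1/2} exp(-(x-μ)²/(2kx)) on (0,∞) is M(t) = ∫₀^∞ e^{tx} f(x) dx = (1-2kt)^{-1/2} · exp((μ/k)(1 - √(1-2kt))). -/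
open Real MeasureTheory

section aux
open Set


theorem img_univ (a b : ℝ) (ha : 0 < a) (hb : 0 < b) :
    (fun y => a * y - b / y) '' Ioi 0 = univ := by
  ext u
  simp only [mem_image, mem_Ioi, mem_univ, iff_true]
  set s := Real.sqrt (u ^ 2 + 4 * a * b) with hs
  have hs2 : s ^ 2 = u ^ 2 + 4 * a * b := Real.sq_sqrt (by positivity)
  have hsu : -u < s := by
    nlinarith [Real.sqrt_nonneg (u ^ 2 + 4 * a * b)]
  set y := (u + s) / (2 * a) with hyd
  have hy : 0 < y := div_pos (by linarith) (by linarith)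
  refine ⟨y, hy, ?_⟩
  have key : a * y ^ 2 - u * y - b = 0 := by
    rw [hyd]; field_simp; nlinarith [hs2]
  have h1 : a * y - b / y = (a * y ^ 2 - b) / y := by field_simp
  rw [h1, show a * y ^ 2 - b = u * y by linarith, mul_div_assoc, div_self hy.ne', mul_one]

theorem glasser (a b : ℝ) (ha : 0 < a) (hb : 0 < b) :
    ∫ y in Ioi (0:ℝ), Real.exp (-(a * y - b / y) ^ 2) = Real.sqrt π / (2 * a) := by
  set φ := fun y : ℝ => a * y - b / y with hφ
  set I := ∫ y in Ioi (0:ℝ), Real.exp (-(a * y - b / y) ^ 2) with hI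
  -- derivative of φ
  have hderiv : ∀ y ∈ Ioi (0:ℝ), HasDerivWithinAt φ (a + b / y ^ 2) (Ioi 0) y := by
    intro y hy
    have hy0 : y ≠ 0 := (mem_Ioi.1 hy).ne'
    have h1 : HasDerivAt φ (a * 1 - b * (-(y ^ 2)⁻¹)) y := by
      exact (((hasDerivAt_id y).const_mul a).sub ((hasDerivAt_inv hy0).const_mul b)).congr_of_eventuallyEq
        (Filter.Eventually.of_forall fun z => by simp [hφ, div_eq_mul_inv])
    have : a * 1 - b * (-(y ^ 2)⁻¹) = a + b / y ^ 2 := by field_simp; ring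
    exact (this ▸ h1).hasDerivWithinAt
  have hinj : Set.InjOn φ (Ioi 0) := by
    have : StrictMonoOn φ (Ioi 0) := by
      intro x hx y hy hxy
      have h1 : b / y < b / x := div_lt_div_of_pos_left hb (mem_Ioi.1 hx) hxy
      have : a * x < a * y := by nlinarith [mem_Ioi.1 hx]
      simp only [hφ]; linarith
    exact this.injOn
  -- integrability of the main integrand
  have hcont : ContinuousOn (fun y : ℝ => Real.exp (-(a * y - b / y) ^ 2)) (Ioi 0) := by
    fun_prop (disch := intro y hy; exact (mem_Ioi.1 hy).ne')
  have hInt : IntegrableOn (fun y : ℝ => Real.exp (-(a * y - b / y) ^ 2)) (Ioi 0) := by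
    apply Integrable.mono'
      (g := fun y => Real.exp (2 * a * b) * Real.exp (-(a ^ 2) * y ^ 2))
    · exact ((integrable_exp_neg_mul_sq (by positivity : (0:ℝ) < a ^ 2)).const_mul
        (Real.exp (2 * a * b))).integrableOn
    · exact hcont.aestronglyMeasurable measurableSet_Ioi
    · filter_upwards [ae_restrict_mem measurableSet_Ioi] with y hy
      have hy0 : y ≠ 0 := (mem_Ioi.1 hy).ne'
      rw [Real.norm_eq_abs, abs_of_pos (Real.exp_pos _), ← Real.exp_add, Real.exp_le_exp]
      have hbb : b / y * y = b := div_mul_cancel₀ b hy0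
      nlinarith [sq_nonneg (b / y)]
  -- substitution ψ y = b/(a y)
  set ψ := fun y : ℝ => b / (a * y) with hψ
  have hψimg : ψ '' Ioi 0 = Ioi 0 := by
    ext u
    simp only [mem_image, mem_Ioi, hψ]
    constructor
    · rintro ⟨y, hy, rfl⟩; positivity
    · intro hu
      exact ⟨b / (a * u), by positivity, by field_simp⟩
  have hψinj : Set.InjOn ψ (Ioi 0) := by
    have : StrictAntiOn ψ (Ioi 0) := by
      intro x hx y hy hxy
      exact div_lt_div_of_pos_left hb (mul_pos ha (mem_Ioi.1 hx)) (by
        have := mem_Ioi.1 hx; nlinarith)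
    exact this.injOn
  have hψderiv : ∀ y ∈ Ioi (0:ℝ), HasDerivWithinAt ψ (-(b / a) / y ^ 2) (Ioi 0) y := by
    intro y hy
    have hy0 : y ≠ 0 := (mem_Ioi.1 hy).ne'
    have h1 : HasDerivAt ψ ((b / a) * (-(y ^ 2)⁻¹)) y := by
      have he : ψ = fun y : ℝ => (b / a) * y⁻¹ := by
        funext z; rw [hψ]; simp only; rw [div_eq_mul_inv, mul_inv, div_eq_mul_inv]; ring
      rw [he]
      exact (hasDerivAt_inv hy0).const_mul (b / a)
    have : (b / a) * (-(y ^ 2)⁻¹) = -(b / a) / y ^ 2 := by field_simp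
    exact (this ▸ h1).hasDerivWithinAt
  -- φ ∘ ψ = -φ on Ioi 0
  have hcomp : ∀ y ∈ Ioi (0:ℝ), φ (ψ y) = -(φ y) := by
    intro y hy
    have hy0 : y ≠ 0 := (mem_Ioi.1 hy).ne'
    simp only [hφ, hψ]
    field_simp
    ring
  -- I equals ∫ (b/(a y²)) exp(-(φ y)²)
  have subst2 : I = ∫ y in Ioi (0:ℝ), (b / a / y ^ 2) * Real.exp (-(a * y - b / y) ^ 2) := by
    have h := integral_image_eq_integral_abs_deriv_smul measurableSet_Ioi hψderiv hψinj
      (fun y => Real.exp (-(a * y - b / y) ^ 2))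
    rw [hψimg] at h
    rw [hI, h]
    apply setIntegral_congr_fun measurableSet_Ioi
    intro y hy
    have hy0 : (0:ℝ) < y := mem_Ioi.1 hy
    simp only [smul_eq_mul, abs_div, abs_neg]
    rw [abs_of_pos hb, abs_of_pos ha, abs_of_pos (by positivity : (0:ℝ) < y ^ 2)]
    congr 1
    rw [show a * ψ y - b / ψ y = φ (ψ y) from rfl, hcomp y hy]
    rw [neg_sq]
  -- integrability of the second piece
  have hInt2 : IntegrableOn (fun y : ℝ => (b / a / y ^ 2) * Real.exp (-(a * y - b / y) ^ 2))
      (Ioi 0) := by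
    have h0 : IntegrableOn (fun y : ℝ => Real.exp (-(a * y - b / y) ^ 2)) (ψ '' Ioi 0) := by
      rw [hψimg]; exact hInt
    rw [integrableOn_image_iff_integrableOn_abs_deriv_smul measurableSet_Ioi hψderiv hψinj]
      at h0
    apply h0.congr_fun ?_ measurableSet_Ioi
    intro y hy
    have hy0 : (0:ℝ) < y := mem_Ioi.1 hy
    simp only [smul_eq_mul, abs_div, abs_neg]
    rw [abs_of_pos hb, abs_of_pos ha, abs_of_pos (by positivity : (0:ℝ) < y ^ 2)]
    congr 1
    rw [show a * ψ y - b / ψ y = φ (ψ y) from rfl, hcomp y hy]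
    rw [neg_sq]
  -- the master identity
  have master : Real.sqrt π = ∫ y in Ioi (0:ℝ),
      (a + b / y ^ 2) * Real.exp (-(a * y - b / y) ^ 2) := by
    have g1 : (∫ u : ℝ, Real.exp (-u ^ 2)) = Real.sqrt π := by
      simpa using integral_gaussian 1
    have h := integral_image_eq_integral_abs_deriv_smul measurableSet_Ioi hderiv hinj
      (fun u => Real.exp (-u ^ 2))
    rw [img_univ a b ha hb, Measure.restrict_univ] at h
    rw [← g1, h]
    apply setIntegral_congr_fun measurableSet_Ioi
    intro y hy
    have hy0 : (0:ℝ) < y := mem_Ioi.1 hy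
    simp only [smul_eq_mul]
    rw [abs_of_pos (by positivity)]
  -- split and conclude
  have split : (∫ y in Ioi (0:ℝ), (a + b / y ^ 2) * Real.exp (-(a * y - b / y) ^ 2))
      = a * I + a * I := by
    have e1 : ∀ y ∈ Ioi (0:ℝ), (a + b / y ^ 2) * Real.exp (-(a * y - b / y) ^ 2)
        = a * Real.exp (-(a * y - b / y) ^ 2)
          + a * ((b / a / y ^ 2) * Real.exp (-(a * y - b / y) ^ 2)) := by
      intro y hy
      have hy0 : y ≠ 0 := (mem_Ioi.1 hy).ne'
      field_simp
    rw [setIntegral_congr_fun measurableSet_Ioi e1,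
      integral_add (hInt.const_mul a) (hInt2.const_mul a),
      integral_const_mul, integral_const_mul, ← subst2]
  have : Real.sqrt π = 2 * a * I := by rw [master, split]; ring
  rw [hI] at this ⊢
  rw [this, mul_div_cancel_left₀ _ (by positivity : (2 * a) ≠ 0)]

theorem key_integral (α β : ℝ) (hα : 0 < α) (hβ : 0 < β) :
    ∫ x in Ioi (0:ℝ), (Real.sqrt x)⁻¹ * Real.exp (-(α * x + β / x)) =
      Real.sqrt (π / α) * Real.exp (-2 * Real.sqrt (α * β)) := by
  have himg : (fun y : ℝ => y ^ 2) '' Ioi 0 = Ioi 0 := by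
    ext u
    simp only [mem_image, mem_Ioi]
    constructor
    · rintro ⟨y, hy, rfl⟩; positivity
    · intro hu
      exact ⟨Real.sqrt u, Real.sqrt_pos.2 hu, Real.sq_sqrt hu.le⟩
  have hderiv : ∀ y ∈ Ioi (0:ℝ), HasDerivWithinAt (fun y : ℝ => y ^ 2) (2 * y) (Ioi 0) y := by
    intro y hy
    simpa using ((hasDerivAt_pow 2 y).hasDerivWithinAt (s := Ioi 0))
  have hinj : Set.InjOn (fun y : ℝ => y ^ 2) (Ioi 0) := by
    intro x hx y hy h
    simp only at h
    have := mem_Ioi.1 hx; have := mem_Ioi.1 hy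
    nlinarith
  have h := integral_image_eq_integral_abs_deriv_smul measurableSet_Ioi hderiv hinj
    (fun x => (Real.sqrt x)⁻¹ * Real.exp (-(α * x + β / x)))
  rw [himg] at h
  rw [h]
  set sa := Real.sqrt α with hsa
  set sb := Real.sqrt β with hsb
  have ha1 : sa ^ 2 = α := Real.sq_sqrt hα.le
  have hb1 : sb ^ 2 = β := Real.sq_sqrt hβ.le
  have ha0 : 0 < sa := Real.sqrt_pos.2 hα
  have hb0 : 0 < sb := Real.sqrt_pos.2 hβ
  have hab : sa * sb = Real.sqrt (α * β) := (Real.sqrt_mul hα.le β).symm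
  have e1 : ∀ y ∈ Ioi (0:ℝ), |2 * y| • ((Real.sqrt (y ^ 2))⁻¹ *
      Real.exp (-(α * y ^ 2 + β / y ^ 2)))
      = (2 * Real.exp (-2 * Real.sqrt (α * β))) * Real.exp (-(sa * y - sb / y) ^ 2) := by
    intro y hy
    have hy0 : (0:ℝ) < y := mem_Ioi.1 hy
    have hexp : -(α * y ^ 2 + β / y ^ 2) = -2 * Real.sqrt (α * β) + -(sa * y - sb / y) ^ 2 := by
      rw [← hab, ← ha1, ← hb1]
      field_simp
      ring
    rw [smul_eq_mul, abs_of_pos (by linarith), Real.sqrt_sq hy0.le,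
      show (2:ℝ) * Real.exp (-2 * Real.sqrt (α * β)) * Real.exp (-(sa * y - sb / y) ^ 2)
        = 2 * Real.exp (-(α * y ^ 2 + β / y ^ 2)) from by
          rw [mul_assoc, ← Real.exp_add, ← hexp]]
    field_simp
  rw [setIntegral_congr_fun measurableSet_Ioi e1, integral_const_mul, glasser sa sb ha0 hb0]
  rw [Real.sqrt_div Real.pi_nonneg α, ← hsa]
  field_simp

end aux

theorem unlikely_density_mgf (k μ : ℝ) (hk : 0 < k) (hμ : 0 < μ) (t : ℝ)
    (ht : t < 1 / (2 * k)) :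
    ∫ x in Set.Ioi (0:ℝ),
      Real.exp (t * x) *
        ((Real.sqrt (2 * Real.pi * k * x))⁻¹ * Real.exp (-(x - μ)^2 / (2 * k * x)))
      = (Real.sqrt (1 - 2 * k * t))⁻¹ *
          Real.exp ((μ / k) * (1 - Real.sqrt (1 - 2 * k * t))) := by
  have hc1 : 0 < 1 - 2 * k * t := by
    have := (lt_div_iff₀ (by positivity : (0:ℝ) < 2 * k)).mp ht
    nlinarith
  set α := (1 - 2 * k * t) / (2 * k) with hαd
  set β := μ ^ 2 / (2 * k) with hβd
  have hα : 0 < α := by positivity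
  have hβ : 0 < β := by positivity
  have hsq : Real.sqrt (2 * π * k) ≠ 0 := by positivity
  have e1 : ∀ x ∈ Set.Ioi (0:ℝ),
      Real.exp (t * x) *
        ((Real.sqrt (2 * Real.pi * k * x))⁻¹ * Real.exp (-(x - μ)^2 / (2 * k * x)))
      = ((Real.sqrt (2 * π * k))⁻¹ * Real.exp (μ / k)) *
          ((Real.sqrt x)⁻¹ * Real.exp (-(α * x + β / x))) := by
    intro x hx
    have hx0 : (0:ℝ) < x := Set.mem_Ioi.1 hx
    rw [show 2 * Real.pi * k * x = (2 * π * k) * x from rfl,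
      Real.sqrt_mul (by positivity) x, mul_inv]
    have hexp : Real.exp (t * x) * Real.exp (-(x - μ)^2 / (2 * k * x))
        = Real.exp (μ / k) * Real.exp (-(α * x + β / x)) := by
      rw [← Real.exp_add, ← Real.exp_add]
      congr 1
      rw [hαd, hβd]
      field_simp
      ring
    linear_combination ((Real.sqrt (2 * π * k))⁻¹ * (Real.sqrt x)⁻¹) * hexp
  rw [setIntegral_congr_fun measurableSet_Ioi e1, integral_const_mul,
    key_integral α β hα hβ]
  have h2 : Real.sqrt (π / α) = Real.sqrt (2 * π * k) / Real.sqrt (1 - 2 * k * t) := by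
    rw [show π / α = (2 * π * k) / (1 - 2 * k * t) from by rw [hαd]; field_simp,
      Real.sqrt_div (by positivity)]
  have h4 : Real.sqrt (α * β) = (μ / (2 * k)) * Real.sqrt (1 - 2 * k * t) := by
    rw [show α * β = (μ / (2 * k)) ^ 2 * (1 - 2 * k * t) from by
        rw [hαd, hβd]; field_simp,
      Real.sqrt_mul (sq_nonneg _), Real.sqrt_sq (by positivity)]
  rw [h2, h4,
    show Real.exp ((μ / k) * (1 - Real.sqrt (1 - 2 * k * t)))
      = Real.exp (μ / k) * Real.exp (-2 * ((μ / (2 * k)) * Real.sqrt (1 - 2 * k * t))) from by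
        rw [← Real.exp_add]; congr 1; field_simp; ring]
  field_simp
end
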